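/- An R-module M is semisimple if and only if M is retractable and dual Baer. -/

import Mathlib

universe u v

/-- `M` is retractable: there is a nonzero homomorphism `M → N`
for every nonzero submodule `N ≤ M`. -/
def Retractable (R : Type u) [Ring R] (M : Type v) [AddCommGroup M]
    [Module R M] : Prop :=
  ∀ N : Submodule R M, N ≠ ⊥ → ∃ f : Module.End R M, LinearMap.range f ≤ N ∧ f ≠ 0

/-- `M` is a dual Baer module: for every submodule `N` of `M`, the right ideal
`Hom(M,N)` of `End(M)` is generated by an idempotent. -/
def IsDualBaerModule (R : Type u) [Ring R] (M : Type v) [AddCommGroup M]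
    [Module R M] : Prop :=
  ∀ N : Submodule R M, ∃ e : Module.End R M, IsIdempotentElem e ∧
    {f : Module.End R M | LinearMap.range f ≤ N} = Set.range fun s => e * s

theorem stmt16 (R : Type u) [Ring R] (M : Type v) [AddCommGroup M] [Module R M] :
    IsSemisimpleModule R M ↔ Retractable R M ∧ IsDualBaerModule R M := by
  constructor
  · intro hss
    -- for each N get a projection with range N fixing N
    have key : ∀ N : Submodule R M, ∃ e : Module.End R M,
        LinearMap.range e = N ∧ (∀ x ∈ N, e x = x) ∧ IsIdempotentElem e := by
      intro N
      obtain ⟨q, hq⟩ := exists_isCompl N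
      refine ⟨N.subtype ∘ₗ N.projectionOnto q hq, ?_, ?_, ?_⟩
      · apply le_antisymm
        · rintro _ ⟨x, rfl⟩; exact (N.projectionOnto q hq x).2
        · intro x hx
          exact ⟨x, by simp [Submodule.projectionOnto_apply_left hq ⟨x, hx⟩]⟩
      · intro x hx
        simp [Submodule.projectionOnto_apply_left hq ⟨x, hx⟩]
      · ext x
        simp [Submodule.projectionOnto_apply_left hq]
    constructor
    · intro N hN
      obtain ⟨e, hrange, hfix, _⟩ := key N
      refine ⟨e, hrange.le, fun h => hN ?_⟩
      rw [← hrange, h, LinearMap.range_zero]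
    · intro N
      obtain ⟨e, hrange, hfix, hidem⟩ := key N
      refine ⟨e, hidem, ?_⟩
      ext f
      simp only [Set.mem_setOf_eq, Set.mem_range]
      constructor
      · intro hf
        refine ⟨f, ?_⟩
        ext x
        exact hfix (f x) (hf ⟨x, rfl⟩)
      · rintro ⟨s, rfl⟩
        rintro _ ⟨x, rfl⟩
        rw [← hrange]
        exact ⟨s x, rfl⟩
  · rintro ⟨hret, hdb⟩
    rw [isSemisimpleModule_iff]
    constructor
    intro N
    obtain ⟨e, hidem, hset⟩ := hdb N
    have heN : LinearMap.range e ≤ N := by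
      have : e ∈ Set.range fun s => e * s := ⟨1, (mul_one e)⟩
      rw [← hset] at this; exact this
    -- N ⊓ ker e = ⊥
    have hbot : N ⊓ LinearMap.ker e = ⊥ := by
      by_contra h
      obtain ⟨f, hfr, hf0⟩ := hret _ h
      have hfN : f ∈ {f : Module.End R M | LinearMap.range f ≤ N} :=
        hfr.trans inf_le_left
      rw [hset] at hfN
      obtain ⟨s, rfl⟩ := hfN
      apply hf0
      ext x
      have h1 : (e * s) x ∈ LinearMap.ker e := hfr ⟨x, rfl⟩ |>.2
      have h2 : e ((e * s) x) = (e * s) x := by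
        show (e * (e * s)) x = (e * s) x
        rw [← mul_assoc, hidem]
      show (e * s) x = 0
      rw [← h2]
      simpa using h1
    -- e is a projection fixing range e
    have hproj : LinearMap.IsProj (LinearMap.range e) e := by
      constructor
      · intro x; exact ⟨x, rfl⟩
      · rintro _ ⟨x, rfl⟩
        show (e * e) x = e x
        rw [hidem]
    have hcompl := hproj.isCompl
    have hNe : N = LinearMap.range e := by
      apply le_antisymm _ heN
      intro x hx
      -- x = e x + (x - e x), with x - e x ∈ ker e ⊓ N
      have hker : x - e x ∈ LinearMap.ker e := by
        simp only [LinearMap.mem_ker, map_sub, sub_eq_zero]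
        exact (hproj.map_id _ ⟨x, rfl⟩).symm
      have hmem : x - e x ∈ N ⊓ LinearMap.ker e :=
        ⟨N.sub_mem hx (heN ⟨x, rfl⟩), hker⟩
      rw [hbot, Submodule.mem_bot, sub_eq_zero] at hmem
      have : x = e x := hmem
      rw [this]; exact ⟨x, rfl⟩
    exact ⟨LinearMap.ker e, by rw [hNe]; exact hcompl⟩
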